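/- Let K be a field, A a K-vector space, (μ_s)_{s∈ℕ} an associative deformation order by order, and let (ρ_s)_{s∈ℕ} and (ρ̃_s)_{s∈ℕ} be two right-module deformations of the same ρ_0 with respect to (μ_s), order by order at every order. Let r ∈ ℕ and T_0 = id_E, T_1, …, T_r ∈ End_K(E) be an equivalence up to order r: for all n ≤ r and a ∈ A, Σ_{s=0}^{n} T_s ∘ ρ_{n−s}(a) = Σ_{s=0}^{n} ρ̃_{n−s}(a) ∘ T_s. Define E_r : A → End_K(E) by E_r(a) = Σ_{s=0}^{r} ( ρ̃_{r+1−s}(a) ∘ T_s − T_s ∘ ρ_{r+1−s}(a) ). Then: (i) for any T_{r+1} ∈ End_K(E), the maps T_0, …, T_{r+1} form an equivalence up to order r+1 if and only if T_{r+1} ∘ ρ_0(a) − ρ_0(a) ∘ T_{r+1} = E_r(a) for all a ∈ A; and (ii) δE_r = 0, i.e. E_r(b) ∘ ρ_0(a) − E_r(μ_0(a,b)) + ρ_0(b) ∘ E_r(a) = 0 for all a,b ∈ A. -/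

import Mathlib

namespace Stmt10

variable {K A E : Type*} [Field K] [AddCommGroup A] [Module K A]
  [AddCommGroup E] [Module K E]

/-- The condition expressing associativity of a formal deformation `μ = ∑ λ^s μ_s`
in order `n`. -/
def AssocOrder {A : Type*} [AddCommGroup A] (μ : ℕ → A → A → A) (n : ℕ) : Prop :=
  ∀ a b c : A,
    ∑ s ∈ Finset.range (n+1), (μ s (μ (n-s) a b) c - μ s a (μ (n-s) b c)) = 0

/-- The obstruction `E_r(a) = ∑_{s=0}^{r} (ρ̃_{r+1−s}(a) ∘ T_s − T_s ∘ ρ_{r+1−s}(a))`. -/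
def Eobs (ρ ρ' : ℕ → A →ₗ[K] (E →ₗ[K] E)) (T : ℕ → E →ₗ[K] E) (r : ℕ)
    (a : A) : E →ₗ[K] E :=
  ∑ s ∈ Finset.range (r+1), ((ρ' (r+1-s) a) ∘ₗ (T s) - (T s) ∘ₗ (ρ (r+1-s) a))

private lemma tri_swap {M : Type*} [AddCommMonoid M] (N : ℕ) (f : ℕ → ℕ → M) :
    ∑ k ∈ Finset.range N, ∑ i ∈ Finset.range (N - k), f k i
      = ∑ i ∈ Finset.range N, ∑ k ∈ Finset.range (N - i), f k i :=
  Finset.sum_comm' (by intro k i; simp only [Finset.mem_range]; omega)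

private lemma tri_comm {M : Type*} [AddCommMonoid M] (N : ℕ) (f : ℕ → ℕ → M) :
    ∑ p ∈ Finset.range N, ∑ i ∈ Finset.range (p + 1), f p i
      = ∑ i ∈ Finset.range N, ∑ s ∈ Finset.range (N - i), f (i + s) i := by
  rw [Finset.sum_comm' (t' := Finset.range N) (s' := fun i => Finset.Ico i N)
    (by intro p i; simp only [Finset.mem_range, Finset.mem_Ico]; omega)]
  exact Finset.sum_congr rfl fun i _ => Finset.sum_Ico_eq_sum_range (fun p => f p i) i N

/-- Obstruction theory for equivalences of right-module deformations:
if `T_0 = id, T_1, …, T_r` form an equivalence up to order `r` between two module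
deformations `(ρ_s)` and `(ρ̃_s)` of the same `ρ_0`, then (i) `T_0, …, T_{r+1}` form an
equivalence up to order `r+1` iff `δT_{r+1} = E_r`, and (ii) `δE_r = 0`. -/
theorem equivalence_obstruction_module
    (μ : ℕ → A →ₗ[K] A →ₗ[K] A)
    (hμ : ∀ n, AssocOrder (fun s x y => μ s x y) n)
    (ρ ρ' : ℕ → A →ₗ[K] (E →ₗ[K] E))
    (h0 : ρ' 0 = ρ 0)
    (hρ : ∀ n, ∀ a b : A,
      ∑ s ∈ Finset.range (n+1), ρ s (μ (n-s) a b)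
        = ∑ s ∈ Finset.range (n+1), (ρ s b) ∘ₗ (ρ (n-s) a))
    (hρ' : ∀ n, ∀ a b : A,
      ∑ s ∈ Finset.range (n+1), ρ' s (μ (n-s) a b)
        = ∑ s ∈ Finset.range (n+1), (ρ' s b) ∘ₗ (ρ' (n-s) a))
    (r : ℕ) (T : ℕ → E →ₗ[K] E) (hT0 : T 0 = LinearMap.id)
    (hT : ∀ n ≤ r, ∀ a : A,
      ∑ s ∈ Finset.range (n+1), (T s) ∘ₗ (ρ (n-s) a)
        = ∑ s ∈ Finset.range (n+1), (ρ' (n-s) a) ∘ₗ (T s)) :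
    (∀ U : E →ₗ[K] E,
      (∀ n ≤ r + 1, ∀ a : A,
        ∑ s ∈ Finset.range (n+1),
            ((if s = r+1 then U else T s) ∘ₗ (ρ (n-s) a))
          = ∑ s ∈ Finset.range (n+1),
              ((ρ' (n-s) a) ∘ₗ (if s = r+1 then U else T s)))
        ↔ (∀ a : A, U ∘ₗ (ρ 0 a) - (ρ 0 a) ∘ₗ U = Eobs ρ ρ' T r a))
    ∧ (∀ a b : A,
        (Eobs ρ ρ' T r b) ∘ₗ (ρ 0 a) - Eobs ρ ρ' T r (μ 0 a b)
          + (ρ 0 b) ∘ₗ (Eobs ρ ρ' T r a) = 0) := by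
  classical
  simp only [← Module.End.mul_eq_comp] at hT hρ hρ' ⊢
  set Tt : ℕ → (E →ₗ[K] E) := fun s => if s = r + 1 then 0 else T s with hTtdef
  have hTtlow : ∀ s, s ≤ r → Tt s = T s := by
    intro s hs; simp only [hTtdef]; rw [if_neg (by omega)]
  have hTttop : Tt (r + 1) = 0 := by simp [hTtdef]
  have hDlow : ∀ m, m ≤ r → ∀ x : A,
      ∑ s ∈ Finset.range (m+1), (Tt s * ρ (m-s) x - ρ' (m-s) x * Tt s) = 0 := by
    intro m hm x
    rw [Finset.sum_congr rfl (fun s hs => by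
      rw [hTtlow s (by simp only [Finset.mem_range] at hs; omega)]),
      Finset.sum_sub_distrib, hT m hm x, sub_self]
  have hE : ∀ x : A, Eobs ρ ρ' T r x
      = ∑ s ∈ Finset.range (r+1), (ρ' (r+1-s) x * T s - T s * ρ (r+1-s) x) := fun x => rfl
  have hD : ∀ x : A,
      ∑ s ∈ Finset.range (r+1+1), (Tt s * ρ (r+1-s) x - ρ' (r+1-s) x * Tt s)
        = - Eobs ρ ρ' T r x := by
    intro x
    rw [Finset.sum_range_succ, hTttop, zero_mul, mul_zero, sub_zero, add_zero, hE x,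
      Finset.sum_sub_distrib, Finset.sum_sub_distrib, neg_sub]
    congr 1
    · exact Finset.sum_congr rfl fun s hs => by
        rw [hTtlow s (by simp only [Finset.mem_range] at hs; omega)]
    · exact Finset.sum_congr rfl fun s hs => by
        rw [hTtlow s (by simp only [Finset.mem_range] at hs; omega)]
  have key : ∀ a b : A,
      ∑ s ∈ Finset.range (r+1+1),
          (Tt s * ρ (r+1-s) (μ 0 a b) - ρ' (r+1-s) (μ 0 a b) * Tt s)
        = (∑ s ∈ Finset.range (r+1+1), (Tt s * ρ (r+1-s) b - ρ' (r+1-s) b * Tt s)) * ρ 0 a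
          + ρ 0 b * (∑ s ∈ Finset.range (r+1+1),
              (Tt s * ρ (r+1-s) a - ρ' (r+1-s) a * Tt s)) := by
    intro a b
    have step1 :
        ∑ k ∈ Finset.range (r+1+1), ∑ i ∈ Finset.range (r+1+1-k),
            (Tt i * ρ (r+1-k-i) (μ k a b) - ρ' (r+1-k-i) (μ k a b) * Tt i)
          = ∑ s ∈ Finset.range (r+1+1),
              (Tt s * ρ (r+1-s) (μ 0 a b) - ρ' (r+1-s) (μ 0 a b) * Tt s) := by
      rw [Finset.sum_eq_single_of_mem 0 (Finset.mem_range.2 (by omega))]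
      · simp only [Nat.sub_zero]
      · intro k hk hk0
        have hk' : k ≤ r + 1 := by simp only [Finset.mem_range] at hk; omega
        rw [show r+1+1-k = (r+1-k)+1 from by omega]
        exact hDlow (r+1-k) (by omega) (μ k a b)
    have step3 : ∀ i ∈ Finset.range (r+1+1),
        ∑ k ∈ Finset.range (r+1+1-i),
            (Tt i * ρ (r+1-k-i) (μ k a b) - ρ' (r+1-k-i) (μ k a b) * Tt i)
          = ∑ s ∈ Finset.range (r+1+1-i),
              (Tt i * (ρ s b * ρ (r+1-i-s) a) - (ρ' s b * ρ' (r+1-i-s) a) * Tt i) := by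
      intro i hi
      have hi' : i ≤ r + 1 := by simp only [Finset.mem_range] at hi; omega
      rw [show r+1+1-i = (r+1-i)+1 from by omega]
      rw [Finset.sum_congr rfl (fun k _ => by rw [show r+1-k-i = r+1-i-k from by omega])]
      rw [Finset.sum_sub_distrib, ← Finset.mul_sum, ← Finset.sum_mul]
      have refl1 : ∑ k ∈ Finset.range ((r+1-i)+1), ρ (r+1-i-k) (μ k a b)
          = ∑ s ∈ Finset.range ((r+1-i)+1), ρ s (μ (r+1-i-s) a b) := by
        rw [← Finset.sum_range_reflect (fun s => ρ s (μ (r+1-i-s) a b)) ((r+1-i)+1)]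
        refine Finset.sum_congr rfl fun j hj => ?_
        have hj' : j ≤ r+1-i := by simp only [Finset.mem_range] at hj; omega
        rw [show (r+1-i)+1-1-j = r+1-i-j from by omega,
          show r+1-i-(r+1-i-j) = j from by omega]
      have refl2 : ∑ k ∈ Finset.range ((r+1-i)+1), ρ' (r+1-i-k) (μ k a b)
          = ∑ s ∈ Finset.range ((r+1-i)+1), ρ' s (μ (r+1-i-s) a b) := by
        rw [← Finset.sum_range_reflect (fun s => ρ' s (μ (r+1-i-s) a b)) ((r+1-i)+1)]
        refine Finset.sum_congr rfl fun j hj => ?_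
        have hj' : j ≤ r+1-i := by simp only [Finset.mem_range] at hj; omega
        rw [show (r+1-i)+1-1-j = r+1-i-j from by omega,
          show r+1-i-(r+1-i-j) = j from by omega]
      rw [refl1, refl2, hρ (r+1-i) a b, hρ' (r+1-i) a b,
        Finset.mul_sum, Finset.sum_mul, ← Finset.sum_sub_distrib]
    have hP : ∑ p ∈ Finset.range (r+1+1),
          (∑ i ∈ Finset.range (p+1), (Tt i * ρ (p-i) b - ρ' (p-i) b * Tt i)) * ρ (r+1-p) a
        = (∑ i ∈ Finset.range (r+1+1), ∑ s ∈ Finset.range (r+1+1-i),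
              Tt i * (ρ s b * ρ (r+1-i-s) a))
          - ∑ i ∈ Finset.range (r+1+1), ∑ s ∈ Finset.range (r+1+1-i),
              ρ' s b * (Tt i * ρ (r+1-i-s) a) := by
      calc ∑ p ∈ Finset.range (r+1+1),
            (∑ i ∈ Finset.range (p+1), (Tt i * ρ (p-i) b - ρ' (p-i) b * Tt i)) * ρ (r+1-p) a
          = ∑ p ∈ Finset.range (r+1+1), ∑ i ∈ Finset.range (p+1),
              (Tt i * ρ (p-i) b * ρ (r+1-p) a - ρ' (p-i) b * Tt i * ρ (r+1-p) a) := by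
            refine Finset.sum_congr rfl fun p _ => ?_
            rw [Finset.sum_mul]
            exact Finset.sum_congr rfl fun i _ => sub_mul _ _ _
        _ = ∑ i ∈ Finset.range (r+1+1), ∑ s ∈ Finset.range (r+1+1-i),
              (Tt i * ρ ((i+s)-i) b * ρ (r+1-(i+s)) a
                - ρ' ((i+s)-i) b * Tt i * ρ (r+1-(i+s)) a) :=
            tri_comm (r+1+1) (fun p i => Tt i * ρ (p-i) b * ρ (r+1-p) a
              - ρ' (p-i) b * Tt i * ρ (r+1-p) a)
        _ = ∑ i ∈ Finset.range (r+1+1), ∑ s ∈ Finset.range (r+1+1-i),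
              (Tt i * (ρ s b * ρ (r+1-i-s) a) - ρ' s b * (Tt i * ρ (r+1-i-s) a)) := by
            refine Finset.sum_congr rfl fun i _ => Finset.sum_congr rfl fun s _ => ?_
            rw [show (i+s)-i = s from by omega, show r+1-(i+s) = r+1-i-s from by omega]
            simp only [mul_assoc]
        _ = _ := by
            rw [← Finset.sum_sub_distrib]
            exact Finset.sum_congr rfl fun i _ => Finset.sum_sub_distrib _ _
    have hQ : ∑ p ∈ Finset.range (r+1+1),
          ρ' p b * (∑ i ∈ Finset.range (r+1+1-p),
            (Tt i * ρ (r+1-p-i) a - ρ' (r+1-p-i) a * Tt i))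
        = (∑ i ∈ Finset.range (r+1+1), ∑ s ∈ Finset.range (r+1+1-i),
              ρ' s b * (Tt i * ρ (r+1-i-s) a))
          - ∑ i ∈ Finset.range (r+1+1), ∑ s ∈ Finset.range (r+1+1-i),
              (ρ' s b * ρ' (r+1-i-s) a) * Tt i := by
      calc ∑ p ∈ Finset.range (r+1+1),
            ρ' p b * (∑ i ∈ Finset.range (r+1+1-p),
              (Tt i * ρ (r+1-p-i) a - ρ' (r+1-p-i) a * Tt i))
          = ∑ p ∈ Finset.range (r+1+1), ∑ i ∈ Finset.range (r+1+1-p),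
              (ρ' p b * (Tt i * ρ (r+1-p-i) a) - ρ' p b * (ρ' (r+1-p-i) a * Tt i)) := by
            refine Finset.sum_congr rfl fun p _ => ?_
            rw [Finset.mul_sum]
            exact Finset.sum_congr rfl fun i _ => mul_sub _ _ _
        _ = ∑ i ∈ Finset.range (r+1+1), ∑ p ∈ Finset.range (r+1+1-i),
              (ρ' p b * (Tt i * ρ (r+1-p-i) a) - ρ' p b * (ρ' (r+1-p-i) a * Tt i)) :=
            tri_swap (r+1+1) (fun p i => ρ' p b * (Tt i * ρ (r+1-p-i) a)
              - ρ' p b * (ρ' (r+1-p-i) a * Tt i))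
        _ = ∑ i ∈ Finset.range (r+1+1), ∑ s ∈ Finset.range (r+1+1-i),
              (ρ' s b * (Tt i * ρ (r+1-i-s) a) - (ρ' s b * ρ' (r+1-i-s) a) * Tt i) := by
            refine Finset.sum_congr rfl fun i _ => Finset.sum_congr rfl fun s _ => ?_
            rw [show r+1-s-i = r+1-i-s from by omega]
            simp only [mul_assoc]
        _ = _ := by
            rw [← Finset.sum_sub_distrib]
            exact Finset.sum_congr rfl fun i _ => Finset.sum_sub_distrib _ _
    have hPval : ∑ p ∈ Finset.range (r+1+1),
          (∑ i ∈ Finset.range (p+1), (Tt i * ρ (p-i) b - ρ' (p-i) b * Tt i)) * ρ (r+1-p) a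
        = (∑ s ∈ Finset.range (r+1+1), (Tt s * ρ (r+1-s) b - ρ' (r+1-s) b * Tt s)) * ρ 0 a := by
      rw [Finset.sum_eq_single_of_mem (r+1) (Finset.mem_range.2 (by omega))]
      · rw [show r+1-(r+1) = 0 from by omega]
      · intro p hp hp0
        rw [hDlow p (by simp only [Finset.mem_range] at hp; omega) b, zero_mul]
    have hQval : ∑ p ∈ Finset.range (r+1+1),
          ρ' p b * (∑ i ∈ Finset.range (r+1+1-p),
            (Tt i * ρ (r+1-p-i) a - ρ' (r+1-p-i) a * Tt i))
        = ρ 0 b * (∑ s ∈ Finset.range (r+1+1),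
            (Tt s * ρ (r+1-s) a - ρ' (r+1-s) a * Tt s)) := by
      rw [Finset.sum_eq_single_of_mem 0 (Finset.mem_range.2 (by omega))]
      · rw [h0]; simp only [Nat.sub_zero]
      · intro p hp hp0
        have hp' : p ≤ r + 1 := by simp only [Finset.mem_range] at hp; omega
        rw [show r+1+1-p = (r+1-p)+1 from by omega, hDlow (r+1-p) (by omega) a, mul_zero]
    calc ∑ s ∈ Finset.range (r+1+1),
          (Tt s * ρ (r+1-s) (μ 0 a b) - ρ' (r+1-s) (μ 0 a b) * Tt s)
        = ∑ k ∈ Finset.range (r+1+1), ∑ i ∈ Finset.range (r+1+1-k),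
            (Tt i * ρ (r+1-k-i) (μ k a b) - ρ' (r+1-k-i) (μ k a b) * Tt i) := step1.symm
      _ = ∑ i ∈ Finset.range (r+1+1), ∑ k ∈ Finset.range (r+1+1-i),
            (Tt i * ρ (r+1-k-i) (μ k a b) - ρ' (r+1-k-i) (μ k a b) * Tt i) :=
          tri_swap (r+1+1) (fun k i => Tt i * ρ (r+1-k-i) (μ k a b)
            - ρ' (r+1-k-i) (μ k a b) * Tt i)
      _ = ∑ i ∈ Finset.range (r+1+1), ∑ s ∈ Finset.range (r+1+1-i),
            (Tt i * (ρ s b * ρ (r+1-i-s) a) - (ρ' s b * ρ' (r+1-i-s) a) * Tt i) :=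
          Finset.sum_congr rfl step3
      _ = (∑ i ∈ Finset.range (r+1+1), ∑ s ∈ Finset.range (r+1+1-i),
              Tt i * (ρ s b * ρ (r+1-i-s) a))
          - ∑ i ∈ Finset.range (r+1+1), ∑ s ∈ Finset.range (r+1+1-i),
              (ρ' s b * ρ' (r+1-i-s) a) * Tt i := by
          rw [← Finset.sum_sub_distrib]
          exact Finset.sum_congr rfl fun i _ => Finset.sum_sub_distrib _ _
      _ = (∑ p ∈ Finset.range (r+1+1),
            (∑ i ∈ Finset.range (p+1), (Tt i * ρ (p-i) b - ρ' (p-i) b * Tt i)) * ρ (r+1-p) a)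
          + ∑ p ∈ Finset.range (r+1+1),
            ρ' p b * (∑ i ∈ Finset.range (r+1+1-p),
              (Tt i * ρ (r+1-p-i) a - ρ' (r+1-p-i) a * Tt i)) := by
          rw [hP, hQ]; abel
      _ = _ := by rw [hPval, hQval]
  constructor
  · intro U
    constructor
    · intro h a
      have h1 := h (r+1) le_rfl a
      rw [Finset.sum_range_succ (fun x => (if x = r+1 then U else T x) * ρ (r+1-x) a) (r+1),
        Finset.sum_range_succ (fun x => ρ' (r+1-x) a * (if x = r+1 then U else T x)) (r+1)]
        at h1
      simp only [if_pos rfl] at h1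
      rw [show r+1-(r+1) = 0 from by omega, h0] at h1
      have e1 : ∑ s ∈ Finset.range (r+1), ((if s = r+1 then U else T s) * ρ (r+1-s) a)
          = ∑ s ∈ Finset.range (r+1), (T s * ρ (r+1-s) a) :=
        Finset.sum_congr rfl fun s hs => by
          rw [if_neg (show ¬ s = r+1 by simp only [Finset.mem_range] at hs; omega)]
      have e2 : ∑ s ∈ Finset.range (r+1), (ρ' (r+1-s) a * (if s = r+1 then U else T s))
          = ∑ s ∈ Finset.range (r+1), (ρ' (r+1-s) a * T s) :=
        Finset.sum_congr rfl fun s hs => by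
          rw [if_neg (show ¬ s = r+1 by simp only [Finset.mem_range] at hs; omega)]
      rw [e1, e2] at h1
      rw [hE a, Finset.sum_sub_distrib, sub_eq_sub_iff_add_eq_add]
      exact (add_comm _ _).trans h1
    · intro h n hn a
      by_cases hn' : n = r + 1
      · subst hn'
        rw [Finset.sum_range_succ (fun x => (if x = r+1 then U else T x) * ρ (r+1-x) a) (r+1),
          Finset.sum_range_succ (fun x => ρ' (r+1-x) a * (if x = r+1 then U else T x)) (r+1)]
        simp only [if_pos rfl]
        rw [show r+1-(r+1) = 0 from by omega, h0]
        have e1 : ∑ s ∈ Finset.range (r+1), ((if s = r+1 then U else T s) * ρ (r+1-s) a)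
            = ∑ s ∈ Finset.range (r+1), (T s * ρ (r+1-s) a) :=
          Finset.sum_congr rfl fun s hs => by
            rw [if_neg (show ¬ s = r+1 by simp only [Finset.mem_range] at hs; omega)]
        have e2 : ∑ s ∈ Finset.range (r+1), (ρ' (r+1-s) a * (if s = r+1 then U else T s))
            = ∑ s ∈ Finset.range (r+1), (ρ' (r+1-s) a * T s) :=
          Finset.sum_congr rfl fun s hs => by
            rw [if_neg (show ¬ s = r+1 by simp only [Finset.mem_range] at hs; omega)]
        rw [e1, e2]
        have hc := h a
        rw [hE a, Finset.sum_sub_distrib, sub_eq_sub_iff_add_eq_add] at hc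
        exact (add_comm _ _).trans hc
      · have hnr : n ≤ r := by omega
        have e1 : ∑ s ∈ Finset.range (n+1), ((if s = r+1 then U else T s) * ρ (n-s) a)
            = ∑ s ∈ Finset.range (n+1), (T s * ρ (n-s) a) :=
          Finset.sum_congr rfl fun s hs => by
            rw [if_neg (show ¬ s = r+1 by simp only [Finset.mem_range] at hs; omega)]
        have e2 : ∑ s ∈ Finset.range (n+1), (ρ' (n-s) a * (if s = r+1 then U else T s))
            = ∑ s ∈ Finset.range (n+1), (ρ' (n-s) a * T s) :=
          Finset.sum_congr rfl fun s hs => by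
            rw [if_neg (show ¬ s = r+1 by simp only [Finset.mem_range] at hs; omega)]
        rw [e1, e2]
        exact hT n hnr a
  · intro a b
    have hk := key a b
    rw [hD (μ 0 a b), hD a, hD b, neg_mul, mul_neg] at hk
    have hk' : Eobs ρ ρ' T r (μ 0 a b)
        = ρ 0 b * Eobs ρ ρ' T r a + Eobs ρ ρ' T r b * ρ 0 a := by
      have := congrArg Neg.neg hk
      simpa [neg_add] using this
    rw [hk']
    abel


end Stmt10
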